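/- Abstract form of Theorem 1.1 (global error bound from local approximation errors): under the stated assumptions, ‖∑_{i=1}^M g_i‖_{L²(μ;E)} ≤ √(κ κ*) · (max_{i=1,…,M} ε_i) · ‖G‖_{L²(μ)}. -/

import Mathlib

open MeasureTheory

theorem aux_sq_int {Ω : Type*} [MeasurableSpace Ω] {μ : Measure Ω}
    {E : Type*} [NormedAddCommGroup E] {f : Ω → E} (hf : MemLp f 2 μ) :
    Integrable (fun x => ‖f x‖ ^ 2) μ := by
  have h := hf.integrable_norm_rpow (by norm_num) (by norm_num)
  simpa [ENNReal.toReal_ofNat, Real.rpow_natCast] using h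

/-- Abstract form of Theorem 1.1: global error bound from local approximation errors.
If each `g i` vanishes a.e. outside `ω i ⊆ ω* i`, a.e. every point lies in at most `κ`
of the sets `ω i` and at most `κ*` of the sets `ω* i`, and `‖g i‖_{L²} ≤ ε i ‖G·1_{ω* i}‖_{L²}`,
then `‖∑ g i‖_{L²} ≤ √(κ κ*) (max ε i) ‖G‖_{L²}`. -/
theorem global_error_from_local_errors
    {Ω : Type*} [MeasurableSpace Ω] (μ : Measure Ω)
    {E : Type*} [NormedAddCommGroup E] [InnerProductSpace ℝ E] [CompleteSpace E]
    (M : ℕ) (hM : 0 < M) (g : Fin M → Ω → E) (ω ωs : Fin M → Set Ω) (κ κs : ℕ)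
    (G : Ω → ℝ) (ε : Fin M → ℝ)
    (hg : ∀ i, MemLp (g i) 2 μ)
    (hG : MemLp G 2 μ)
    (hω : ∀ i, MeasurableSet (ω i))
    (hωs : ∀ i, MeasurableSet (ωs i))
    (hsub : ∀ i, ω i ⊆ ωs i)
    (hsupp : ∀ i, ∀ᵐ x ∂μ, x ∉ ω i → g i x = 0)
    (hκ : ∀ᵐ x ∂μ, ∑ i, (ω i).indicator (fun _ => (1 : ℝ)) x ≤ (κ : ℝ))
    (hκs : ∀ᵐ x ∂μ, ∑ i, (ωs i).indicator (fun _ => (1 : ℝ)) x ≤ (κs : ℝ))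
    (hε : ∀ i, 0 ≤ ε i)
    (hloc : ∀ i, Real.sqrt (∫ x, ‖g i x‖ ^ 2 ∂μ) ≤
      ε i * Real.sqrt (∫ x in ωs i, (G x) ^ 2 ∂μ)) :
    Real.sqrt (∫ x, ‖∑ i, g i x‖ ^ 2 ∂μ) ≤
      Real.sqrt ((κ : ℝ) * (κs : ℝ)) *
        (Finset.univ.sup' ⟨⟨0, hM⟩, Finset.mem_univ _⟩ ε) *
        Real.sqrt (∫ x, (G x) ^ 2 ∂μ) := by
  set m : ℝ := Finset.univ.sup' ⟨⟨0, hM⟩, Finset.mem_univ _⟩ ε with hm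
  have hm0 : 0 ≤ m := le_trans (hε ⟨0, hM⟩) (Finset.le_sup' ε (Finset.mem_univ _))
  have hmi : ∀ i, ε i ≤ m := fun i => Finset.le_sup' ε (Finset.mem_univ i)
  -- integrability facts
  have hint : ∀ i, Integrable (fun x => ‖g i x‖ ^ 2) μ := fun i => aux_sq_int (hg i)
  have hGsq : Integrable (fun x => (G x) ^ 2) μ := hG.integrable_sq
  have hGset : ∀ i, (0:ℝ) ≤ ∫ x in ωs i, (G x) ^ 2 ∂μ := fun i =>
    integral_nonneg fun x => sq_nonneg _
  -- step 1: pointwise a.e. bound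
  have hpt : ∀ᵐ x ∂μ, ‖∑ i, g i x‖ ^ 2 ≤ (κ : ℝ) * ∑ i, ‖g i x‖ ^ 2 := by
    filter_upwards [MeasureTheory.ae_all_iff.2 hsupp, hκ] with x hx hxκ
    have h1 : ‖∑ i, g i x‖ ≤ ∑ i, (ω i).indicator (fun _ => (1:ℝ)) x * ‖g i x‖ := by
      refine le_trans (norm_sum_le _ _) (le_of_eq (Finset.sum_congr rfl fun i _ => ?_))
      by_cases hxi : x ∈ ω i
      · simp [Set.indicator_of_mem hxi]
      · simp [Set.indicator_of_notMem hxi, hx i hxi]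
    have h2 : (∑ i, (ω i).indicator (fun _ => (1:ℝ)) x * ‖g i x‖) ^ 2 ≤
        (∑ i, ((ω i).indicator (fun _ => (1:ℝ)) x) ^ 2) * ∑ i, ‖g i x‖ ^ 2 :=
      Finset.sum_mul_sq_le_sq_mul_sq _ _ _
    have h3 : (∑ i, ((ω i).indicator (fun _ => (1:ℝ)) x) ^ 2) ≤ (κ : ℝ) := by
      refine le_trans (le_of_eq (Finset.sum_congr rfl fun i _ => ?_)) hxκ
      by_cases hxi : x ∈ ω i <;> simp [Set.indicator, hxi]
    calc ‖∑ i, g i x‖ ^ 2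
        ≤ (∑ i, (ω i).indicator (fun _ => (1:ℝ)) x * ‖g i x‖) ^ 2 := by
          apply pow_le_pow_left₀ (norm_nonneg _) h1
      _ ≤ (∑ i, ((ω i).indicator (fun _ => (1:ℝ)) x) ^ 2) * ∑ i, ‖g i x‖ ^ 2 := h2
      _ ≤ (κ : ℝ) * ∑ i, ‖g i x‖ ^ 2 := by
          apply mul_le_mul_of_nonneg_right h3
          exact Finset.sum_nonneg fun i _ => sq_nonneg _
  -- step 2: integrate
  have hsum_mem : MemLp (fun x => ∑ i, g i x) 2 μ := by
    have := memLp_finset_sum' (μ := μ) (p := 2) Finset.univ (f := g)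
      (fun i _ => hg i)
    convert this using 1
    ext x
    simp
  have hI1 : ∫ x, ‖∑ i, g i x‖ ^ 2 ∂μ ≤ (κ : ℝ) * ∑ i, ∫ x, ‖g i x‖ ^ 2 ∂μ := by
    have h := integral_mono_ae (aux_sq_int hsum_mem)
      ((integrable_finset_sum _ fun i _ => hint i).const_mul (κ : ℝ)) hpt
    calc ∫ x, ‖∑ i, g i x‖ ^ 2 ∂μ ≤ ∫ x, (κ:ℝ) * ∑ i, ‖g i x‖ ^ 2 ∂μ := h
      _ = (κ : ℝ) * ∑ i, ∫ x, ‖g i x‖ ^ 2 ∂μ := by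
          rw [integral_const_mul, integral_finset_sum _ fun i _ => hint i]
  -- step 3: local bounds squared
  have hloc2 : ∀ i, ∫ x, ‖g i x‖ ^ 2 ∂μ ≤ m ^ 2 * ∫ x in ωs i, (G x) ^ 2 ∂μ := by
    intro i
    have h0 : (0:ℝ) ≤ ∫ x, ‖g i x‖ ^ 2 ∂μ := integral_nonneg fun x => sq_nonneg _
    have := Real.sqrt_le_sqrt (le_refl (∫ x, ‖g i x‖ ^ 2 ∂μ))
    have hsq : Real.sqrt (∫ x, ‖g i x‖ ^ 2 ∂μ) ≤ m * Real.sqrt (∫ x in ωs i, (G x) ^ 2 ∂μ) :=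
      le_trans (hloc i) (mul_le_mul_of_nonneg_right (hmi i) (Real.sqrt_nonneg _))
    have := mul_self_le_mul_self (Real.sqrt_nonneg _) hsq
    rw [Real.mul_self_sqrt h0] at this
    calc ∫ x, ‖g i x‖ ^ 2 ∂μ
        ≤ (m * Real.sqrt (∫ x in ωs i, (G x) ^ 2 ∂μ)) *
          (m * Real.sqrt (∫ x in ωs i, (G x) ^ 2 ∂μ)) := this
      _ = m ^ 2 * ∫ x in ωs i, (G x) ^ 2 ∂μ := by
          rw [mul_mul_mul_comm, Real.mul_self_sqrt (hGset i)]; ring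
  -- step 4: overlap bound for ωs
  have hI2 : ∑ i, ∫ x in ωs i, (G x) ^ 2 ∂μ ≤ (κs : ℝ) * ∫ x, (G x) ^ 2 ∂μ := by
    have heq : ∀ i : Fin M, ∫ x in ωs i, (G x) ^ 2 ∂μ
        = ∫ x, (ωs i).indicator (fun y => (G y) ^ 2) x ∂μ :=
      fun i => (integral_indicator (hωs i)).symm
    have hInd : ∀ i : Fin M, Integrable ((ωs i).indicator (fun y => (G y) ^ 2)) μ :=
      fun i => hGsq.indicator (hωs i)
    calc ∑ i, ∫ x in ωs i, (G x) ^ 2 ∂μ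
        = ∫ x, ∑ i, (ωs i).indicator (fun y => (G y) ^ 2) x ∂μ := by
          simp_rw [heq]; rw [integral_finset_sum _ fun i _ => hInd i]
      _ ≤ ∫ x, (κs : ℝ) * (G x) ^ 2 ∂μ := by
          apply integral_mono_ae (integrable_finset_sum _ fun i _ => hInd i)
            (hGsq.const_mul _)
          filter_upwards [hκs] with x hx
          have : ∑ i, (ωs i).indicator (fun y => (G y) ^ 2) x
              = (∑ i, (ωs i).indicator (fun _ => (1:ℝ)) x) * (G x) ^ 2 := by
            rw [Finset.sum_mul]
            refine Finset.sum_congr rfl fun i _ => ?_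
            by_cases hxi : x ∈ ωs i <;> simp [Set.indicator, hxi]
          rw [this]
          exact mul_le_mul_of_nonneg_right hx (sq_nonneg _)
      _ = (κs : ℝ) * ∫ x, (G x) ^ 2 ∂μ := integral_const_mul _ _
  -- combine
  have hGint : (0:ℝ) ≤ ∫ x, (G x) ^ 2 ∂μ := integral_nonneg fun x => sq_nonneg _
  have hmain : ∫ x, ‖∑ i, g i x‖ ^ 2 ∂μ ≤
      ((κ : ℝ) * (κs : ℝ)) * m ^ 2 * ∫ x, (G x) ^ 2 ∂μ := by
    calc ∫ x, ‖∑ i, g i x‖ ^ 2 ∂μ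
        ≤ (κ : ℝ) * ∑ i, ∫ x, ‖g i x‖ ^ 2 ∂μ := hI1
      _ ≤ (κ : ℝ) * ∑ i, m ^ 2 * ∫ x in ωs i, (G x) ^ 2 ∂μ := by
          apply mul_le_mul_of_nonneg_left (Finset.sum_le_sum fun i _ => hloc2 i)
            (Nat.cast_nonneg _)
      _ = (κ : ℝ) * (m ^ 2 * ∑ i, ∫ x in ωs i, (G x) ^ 2 ∂μ) := by
          rw [← Finset.mul_sum]
      _ ≤ (κ : ℝ) * (m ^ 2 * ((κs : ℝ) * ∫ x, (G x) ^ 2 ∂μ)) := by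
          apply mul_le_mul_of_nonneg_left _ (Nat.cast_nonneg _)
          exact mul_le_mul_of_nonneg_left hI2 (sq_nonneg _)
      _ = ((κ : ℝ) * (κs : ℝ)) * m ^ 2 * ∫ x, (G x) ^ 2 ∂μ := by ring
  calc Real.sqrt (∫ x, ‖∑ i, g i x‖ ^ 2 ∂μ)
      ≤ Real.sqrt (((κ : ℝ) * (κs : ℝ)) * m ^ 2 * ∫ x, (G x) ^ 2 ∂μ) :=
        Real.sqrt_le_sqrt hmain
    _ = Real.sqrt ((κ : ℝ) * (κs : ℝ)) * m * Real.sqrt (∫ x, (G x) ^ 2 ∂μ) := by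
        rw [Real.sqrt_mul (by positivity), Real.sqrt_mul (by positivity),
          Real.sqrt_sq hm0]
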